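/- For any real positive semidefinite p×p matrix S and ρ > 0, the graphical lasso objective G(Θ) = log det Θ − tr(SΘ) − ρ Σ_{i,j} |Θ_{ij}| attains its maximum over positive definite matrices Θ. -/

import Mathlib

open Matrix Finset Filter

namespace GlassoAux

variable {p : ℕ}

lemma diag_nonneg {A : Matrix (Fin p) (Fin p) ℝ} (hA : A.PosSemidef) (i : Fin p) :
    0 ≤ A i i := by
  have h := hA.dotProduct_mulVec_nonneg (Pi.single i 1)
  simpa [dotProduct, mulVec, Pi.single_apply, Finset.sum_ite_eq] using h

lemma trace_nonneg {A : Matrix (Fin p) (Fin p) ℝ} (hA : A.PosSemidef) : 0 ≤ A.trace := by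
  rw [Matrix.trace]
  exact Finset.sum_nonneg fun i _ => diag_nonneg hA i

lemma trace_mul_nonneg {S Θ : Matrix (Fin p) (Fin p) ℝ} (hS : S.PosSemidef)
    (hΘ : Θ.PosSemidef) : 0 ≤ (S * Θ).trace := by
  obtain ⟨B, rfl⟩ : ∃ B : Matrix (Fin p) (Fin p) ℝ, S = Bᴴ * B := by
    open MatrixOrder in
    obtain ⟨B, hB⟩ := CStarAlgebra.nonneg_iff_eq_star_mul_self.mp hS.nonneg
    exact ⟨B, hB⟩
  rw [Matrix.mul_assoc, Matrix.trace_mul_comm]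
  exact trace_nonneg (hΘ.mul_mul_conjTranspose_same B)

lemma trace_eq_sum_eig {A : Matrix (Fin p) (Fin p) ℝ} (hA : A.IsHermitian) :
    A.trace = ∑ i, hA.eigenvalues i := by
  nth_rewrite 1 [hA.spectral_theorem]
  rw [Unitary.conjStarAlgAut_apply, Matrix.trace_mul_cycle]
  rw [(Matrix.mem_unitaryGroup_iff').mp (hA.eigenvectorUnitary).2, Matrix.one_mul,
    Matrix.trace_diagonal]
  simp

lemma posDef_of_det_pos {A : Matrix (Fin p) (Fin p) ℝ} (hA : A.PosSemidef)
    (h : 0 < A.det) : A.PosDef := by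
  refine ⟨hA.1, fun x hx => ?_⟩
  rcases lt_or_eq_of_le (hA.2 x) with h' | h'
  · exact h'
  · exfalso
    have h0 : A *ᵥ x = 0 := (hA.dotProduct_mulVec_zero_iff x).mp
      (by simpa [dotProduct, mulVec, Finsupp.sum_fintype, Finset.mul_sum, mul_assoc] using h'.symm)
    have hu : IsUnit A.det := isUnit_iff_ne_zero.mpr h.ne'
    have : x = 0 := by
      have := congrArg (fun v => A⁻¹ *ᵥ v) h0
      simpa [Matrix.mulVec_mulVec, Matrix.nonsing_inv_mul A hu] using this
    exact hx this

lemma det_le_pow {Θ : Matrix (Fin p) (Fin p) ℝ} (hΘ : Θ.PosDef) :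
    Θ.det ≤ (∑ i, ∑ j, |Θ i j|) ^ p := by
  set t := ∑ i, ∑ j, |Θ i j| with ht
  have htr : Θ.trace ≤ t := by
    rw [Matrix.trace]
    refine Finset.sum_le_sum fun i _ => ?_
    calc Θ.diag i ≤ |Θ i i| := le_abs_self _
      _ ≤ ∑ j, |Θ i j| := Finset.single_le_sum (f := fun j => |Θ i j|) (fun j _ => abs_nonneg _) (Finset.mem_univ i)
  have heig : ∀ i, hΘ.1.eigenvalues i ≤ t := by
    intro i
    refine le_trans ?_ htr
    rw [trace_eq_sum_eig hΘ.1]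
    exact Finset.single_le_sum (fun j _ => (hΘ.eigenvalues_pos j).le) (Finset.mem_univ i)
  calc Θ.det = ∏ i, hΘ.1.eigenvalues i := by
        rw [hΘ.1.det_eq_prod_eigenvalues]; norm_num
    _ ≤ ∏ _i : Fin p, t := Finset.prod_le_prod (fun i _ => (hΘ.eigenvalues_pos i).le)
        (fun i _ => heig i)
    _ = t ^ p := by simp

end GlassoAux

open GlassoAux in
theorem glasso_attains_max (p : ℕ) (S : Matrix (Fin p) (Fin p) ℝ)
    (hS : S.PosSemidef) (ρ : ℝ) (hρ : 0 < ρ) :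
    ∃ Θ₀ : Matrix (Fin p) (Fin p) ℝ, Θ₀.PosDef ∧
      ∀ Θ : Matrix (Fin p) (Fin p) ℝ, Θ.PosDef →
        Real.log Θ.det - (S * Θ).trace - ρ * ∑ i, ∑ j, |Θ i j| ≤
        Real.log Θ₀.det - (S * Θ₀).trace - ρ * ∑ i, ∑ j, |Θ₀ i j| := by
  classical
  set G : Matrix (Fin p) (Fin p) ℝ → ℝ :=
    fun Θ => Real.log Θ.det - (S * Θ).trace - ρ * ∑ i, ∑ j, |Θ i j| with hGdef
  -- the penalized linear bound tends to -∞
  have hlo : Filter.Tendsto (fun t : ℝ => (p : ℝ) * Real.log t - ρ * t) Filter.atTop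
      Filter.atBot := by
    have h1 : (fun t : ℝ => (p : ℝ) * Real.log t) =o[Filter.atTop] (id : ℝ → ℝ) :=
      Real.isLittleO_log_id_atTop.const_mul_left _
    have h2 : ∀ᶠ t : ℝ in Filter.atTop,
        (p : ℝ) * Real.log t - ρ * t ≤ -(ρ/2) * t := by
      filter_upwards [h1.bound (by positivity : (0:ℝ) < ρ/2),
        Filter.eventually_ge_atTop (0:ℝ)] with t hb ht
      have hb' : (p : ℝ) * Real.log t ≤ ρ/2 * t := by
        rw [Real.norm_eq_abs, Real.norm_eq_abs, id_eq, abs_of_nonneg ht] at hb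
        exact (le_abs_self _).trans hb
      linarith
    have h3 : Filter.Tendsto (fun t : ℝ => -(ρ/2) * t) Filter.atTop Filter.atBot :=
      (tendsto_const_mul_atBot_of_neg (by linarith : -(ρ/2) < 0)).2 Filter.tendsto_id
    exact tendsto_atBot_mono' _ h2 h3
  obtain ⟨t₀, ht₀⟩ := Filter.eventually_atTop.mp (hlo.eventually_le_atBot (G 1))
  set T : ℝ := max t₀ (max (p : ℝ) 1) with hT
  set δ : ℝ := min 1 (Real.exp (G 1)) with hδdef
  have hδ : 0 < δ := lt_min one_pos (Real.exp_pos _)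
  set K : Set (Matrix (Fin p) (Fin p) ℝ) :=
    {Θ | Θ.PosSemidef ∧ (∑ i, ∑ j, |Θ i j|) ≤ T ∧ δ ≤ Θ.det} with hK
  -- continuity facts
  have hsum : Continuous fun Θ : Matrix (Fin p) (Fin p) ℝ => ∑ i, ∑ j, |Θ i j| :=
    continuous_finset_sum _ fun i _ => continuous_finset_sum _ fun j _ =>
      continuous_abs.comp (continuous_id.matrix_elem i j)
  have hdetc : Continuous fun Θ : Matrix (Fin p) (Fin p) ℝ => Θ.det :=
    continuous_id.matrix_det
  -- K is closed
  have hKclosed : IsClosed K := by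
    have e : K = ({Θ : Matrix (Fin p) (Fin p) ℝ | Θᴴ = Θ} ∩
        ⋂ x : Fin p → ℝ, {Θ | 0 ≤ star x ⬝ᵥ Θ *ᵥ x}) ∩
        ({Θ | (∑ i, ∑ j, |Θ i j|) ≤ T} ∩ {Θ | δ ≤ Θ.det}) := by
      ext Θ
      simp only [hK, Set.mem_setOf_eq, Set.mem_inter_iff, Set.mem_iInter,
        Matrix.posSemidef_iff_dotProduct_mulVec, Matrix.IsHermitian]
    rw [e]
    exact (((isClosed_eq continuous_id.matrix_conjTranspose continuous_id).inter
      (isClosed_iInter fun x => isClosed_le continuous_const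
        (continuous_const.dotProduct (continuous_id.matrix_mulVec
          continuous_const)))).inter
      ((isClosed_le hsum continuous_const).inter
        (isClosed_le continuous_const hdetc)))
  -- K is compact
  have hKcompact : IsCompact K := by
    have hC : IsCompact (Set.univ.pi (fun _ : Fin p => Set.univ.pi
        fun _ : Fin p => Set.Icc (-T) T) : Set (Matrix (Fin p) (Fin p) ℝ)) :=
      isCompact_univ_pi fun _ => isCompact_univ_pi fun _ => isCompact_Icc
    refine hC.of_isClosed_subset hKclosed ?_
    · intro Θ hΘ
      refine Set.mem_univ_pi.mpr fun i => Set.mem_univ_pi.mpr fun j => ?_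
      have h1 : |Θ i j| ≤ ∑ j, |Θ i j| :=
        Finset.single_le_sum (f := fun j => |Θ i j|) (fun j _ => abs_nonneg _)
          (Finset.mem_univ j)
      have h2 : (∑ j, |Θ i j|) ≤ ∑ i, ∑ j, |Θ i j| :=
        Finset.single_le_sum (f := fun i => ∑ j, |Θ i j|)
          (fun i _ => Finset.sum_nonneg fun j _ => abs_nonneg _) (Finset.mem_univ i)
      have := (h1.trans h2).trans hΘ.2.1
      exact Set.mem_Icc.mpr (abs_le.mp this)
  -- G is continuous on K
  have hGcont : ContinuousOn G K := by
    have hlog : ContinuousOn (fun Θ : Matrix (Fin p) (Fin p) ℝ => Real.log Θ.det) K := by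
      refine Real.continuousOn_log.comp hdetc.continuousOn fun Θ hΘ => ?_
      simp only [Set.mem_compl_iff, Set.mem_singleton_iff]
      exact ne_of_gt (lt_of_lt_of_le hδ hΘ.2.2)
    exact (hlog.sub ((continuous_const.matrix_mul continuous_id).matrix_trace).continuousOn).sub
      ((continuous_const.mul hsum).continuousOn)
  -- 1 ∈ K
  have hsum1 : (∑ i, ∑ j, |(1 : Matrix (Fin p) (Fin p) ℝ) i j|) = p := by
    simp [Matrix.one_apply, apply_ite abs]
  have h1K : (1 : Matrix (Fin p) (Fin p) ℝ) ∈ K := by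
    refine ⟨Matrix.PosSemidef.one, ?_, ?_⟩
    · rw [hsum1]; exact le_trans (le_trans (le_max_left _ _) (le_max_right t₀ _)) le_rfl
    · rw [Matrix.det_one]; exact min_le_left _ _
  obtain ⟨Θ₀, hΘ₀K, hmax⟩ := hKcompact.exists_isMaxOn ⟨1, h1K⟩ hGcont
  have hΘ₀pd : Θ₀.PosDef := posDef_of_det_pos hΘ₀K.1 (lt_of_lt_of_le hδ hΘ₀K.2.2)
  refine ⟨Θ₀, hΘ₀pd, fun Θ hΘ => ?_⟩
  show G Θ ≤ G Θ₀
  have hG1 : G 1 ≤ G Θ₀ := hmax h1K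
  set t : ℝ := ∑ i, ∑ j, |Θ i j| with htdef
  have htrS : 0 ≤ (S * Θ).trace := trace_mul_nonneg hS hΘ.posSemidef
  have htnn : 0 ≤ t := Finset.sum_nonneg fun i _ => Finset.sum_nonneg fun j _ => abs_nonneg _
  by_cases hcase1 : t ≤ T
  · by_cases hcase2 : δ ≤ Θ.det
    · exact hmax ⟨hΘ.posSemidef, hcase1, hcase2⟩
    · -- det too small
      push_neg at hcase2
      have h1 : G Θ ≤ Real.log Θ.det := by
        have : 0 ≤ ρ * t := mul_nonneg hρ.le htnn
        simp only [hGdef]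
        linarith
      have h2 : Real.log Θ.det ≤ Real.log δ :=
        (Real.log_le_log_iff hΘ.det_pos hδ).mpr hcase2.le
      have h3 : Real.log δ ≤ G 1 := by
        calc Real.log δ ≤ Real.log (Real.exp (G 1)) :=
              (Real.log_le_log_iff hδ (Real.exp_pos _)).mpr (min_le_right _ _)
          _ = G 1 := Real.log_exp _
      linarith
  · -- t too large
    push_neg at hcase1
    have htpos : 0 < t := lt_of_lt_of_le (by positivity) ((le_trans (le_max_right _ _)
      (le_max_right t₀ _)).trans hcase1.le)
    have hld : Real.log Θ.det ≤ (p : ℝ) * Real.log t := by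
      have h := det_le_pow hΘ
      calc Real.log Θ.det ≤ Real.log (t ^ p) :=
            (Real.log_le_log_iff hΘ.det_pos (by positivity)).mpr h
        _ = (p : ℝ) * Real.log t := by rw [Real.log_pow]
    have h1 : G Θ ≤ (p : ℝ) * Real.log t - ρ * t := by
      simp only [hGdef]
      linarith
    have h2 : (p : ℝ) * Real.log t - ρ * t ≤ G 1 :=
      ht₀ t (le_trans (le_max_left _ _) hcase1.le)
    linarith
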